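/- Let H be a finite set of positive integers, and let S_H be the graph obtained from the disjoint union of stars S_h (h ∈ H) together with a new vertex c, by joining c to the center of each star S_h. Then Z(S_H; {c}, ∅; t, y) = y · Π_{h∈H} ( y·t·(y·t+1)^h + (y+t)^h ) and Z(S_H; ∅, {c}; t, y) = Π_{h∈H} ( y·(y·t+1)^h + t·(y+t)^h ). -/

import Mathlib

open Finset

/-- The set of edges of `G` contained in the vertex subset `S`. -/
def edgeIn {V : Type*} [Fintype V] [DecidableEq V] (G : SimpleGraph V) [DecidableRel G.Adj]
    (S : Finset V) : Finset (Sym2 V) :=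
  G.edgeFinset.filter (· ∈ S.sym2)

/-- The restricted bivariate Ising polynomial `Z(G;B,C;t,y)`: the sum ranges over
all `S` with `B ⊆ S ⊆ V(G) ∖ C`. -/
def ZbiBC {V : Type*} [Fintype V] [DecidableEq V] (G : SimpleGraph V) [DecidableRel G.Adj]
    (B C : Finset V) (t y : ℚ) : ℚ :=
  ∑ S ∈ univ.filter (fun S : Finset V => B ⊆ S ∧ Disjoint S C),
    t ^ ((edgeIn G S).card + (edgeIn G Sᶜ).card) * y ^ S.card

instance fromRel.decidableRel {V : Type*} [DecidableEq V] (r : V → V → Prop) [DecidableRel r] :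
    DecidableRel (SimpleGraph.fromRel r).Adj := fun a b =>
  inferInstanceAs (Decidable (a ≠ b ∧ (r a b ∨ r b a)))

/-- Vertices of the graph `S_H`: `none` is the global center `cent(H)`;
`some ⟨h, none⟩` is the center of the star `S_h`; `some ⟨h, some i⟩` is a leaf of `S_h`. -/
abbrev SHVertex (H : Finset ℕ) : Type :=
  Option ((h : {x // x ∈ H}) × Option (Fin h.1))

/-- Underlying (one-directional) adjacency of `S_H`: the global center is joined to each
star center, and each star center is joined to the leaves of its own star. -/
def shRel (H : Finset ℕ) : SHVertex H → SHVertex H → Bool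
  | none, some ⟨_, none⟩ => true
  | some ⟨h, none⟩, some ⟨h', some _⟩ => h.1 == h'.1
  | _, _ => false

/-- The graph `S_H`, built from the disjoint union of the stars `S_h`, `h ∈ H`, and a new
vertex `cent(H) = none` joined to the center of each star. -/
def SHGraph (H : Finset ℕ) : SimpleGraph (SHVertex H) :=
  SimpleGraph.fromRel (fun a b => shRel H a b = true)

instance (H : Finset ℕ) : DecidableRel (SHGraph H).Adj := fromRel.decidableRel _

namespace ZbiSH

abbrev Idx (H : Finset ℕ) := (h : {x // x ∈ H}) × Option (Fin h.1)

variable (H : Finset ℕ)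
def edgeOf : Idx H → Sym2 (SHVertex H)
  | ⟨h, none⟩ => s(none, some ⟨h, none⟩)
  | ⟨h, some i⟩ => s(some ⟨h, none⟩, some ⟨h, some i⟩)

lemma edgeOf_injective : Function.Injective (edgeOf H) := by
  rintro ⟨h, _ | i⟩ ⟨h', _ | i'⟩ e
  · simp only [edgeOf, Sym2.eq_iff] at e
    rcases e with ⟨-, e⟩ | ⟨e, -⟩
    · obtain ⟨rfl, -⟩ : h = h' ∧ _ := by simpa using e
      rfl
    · simp at e
  · simp [edgeOf, Sym2.eq_iff] at e
  · simp [edgeOf, Sym2.eq_iff] at e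
  · simp only [edgeOf, Sym2.eq_iff] at e
    rcases e with ⟨e1, e2⟩ | ⟨e1, e2⟩
    · obtain ⟨rfl, -⟩ : h = h' ∧ _ := by simpa using e1
      obtain rfl : i = i' := by simpa using e2
      rfl
    · obtain ⟨rfl, e⟩ : h = h' ∧ _ := by simpa using e1
      simp at e

lemma exists_of_rel (a b : SHVertex H) (hr : shRel H a b = true) :
    ∃ d, edgeOf H d = s(a, b) := by
  rcases a with _ | ⟨h, _ | i⟩ <;> rcases b with _ | ⟨h', _ | i'⟩ <;>
    simp only [shRel] at hr <;>
    first
      | exact ⟨⟨h', none⟩, rfl⟩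
      | · obtain rfl : h = h' := Subtype.ext (by simpa using hr)
          exact ⟨⟨h, some i'⟩, rfl⟩
      | exact absurd hr (by simp)

lemma edgeFinset_eq : (SHGraph H).edgeFinset = univ.image (edgeOf H) := by
  ext e
  induction e using Sym2.inductionOn with
  | hf a b =>
    simp only [SimpleGraph.mem_edgeFinset, SimpleGraph.mem_edgeSet]
    simp only [SHGraph,
      SimpleGraph.fromRel_adj, mem_image, mem_univ, true_and]
    constructor
    · rintro ⟨hne, hr | hr⟩
      · exact exists_of_rel H a b hr
      · obtain ⟨d, hd⟩ := exists_of_rel H b a hr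
        exact ⟨d, hd.trans Sym2.eq_swap⟩
    · rintro ⟨⟨h, _ | i⟩, hd⟩ <;> simp only [edgeOf, Sym2.eq_iff] at hd <;>
        rcases hd with ⟨rfl, rfl⟩ | ⟨rfl, rfl⟩ <;>
        exact ⟨by simp, by simp [shRel]⟩

lemma edgeIn_card (S : Finset (SHVertex H)) :
    (edgeIn (SHGraph H) S).card
      = ∑ d : Idx H, if (∀ v ∈ edgeOf H d, v ∈ S) then 1 else 0 := by
  rw [edgeIn, edgeFinset_eq, filter_image, card_image_of_injective _ (edgeOf_injective H),
    card_filter]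
  simp only [Finset.mem_sym2_iff]

def Sof (b : Bool) (g : ∀ h : {x // x ∈ H}, Finset (Option (Fin h.1))) :
    Finset (SHVertex H) :=
  (if b then {none} else ∅) ∪ (Finset.univ.sigma g).image some

@[simp] lemma none_mem_Sof {b g} : (none ∈ Sof H b g) ↔ b = true := by
  cases b <;> simp [Sof]

@[simp] lemma some_mem_Sof {b g} {h : {x // x ∈ H}} {x : Option (Fin h.1)} :
    (some ⟨h, x⟩ ∈ Sof H b g) ↔ x ∈ g h := by
  cases b <;> simp [Sof, Finset.mem_sigma]

lemma card_Sof (b g) :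
    (Sof H b g).card = (if b then 1 else 0) + ∑ h : {x // x ∈ H}, (g h).card := by
  rw [← Finset.filter_univ_mem (Sof H b g), card_filter, Fintype.sum_option,
    ← Finset.univ_sigma_univ, Finset.sum_sigma]
  congr 1
  · cases b <;> simp
  · refine Finset.sum_congr rfl fun h _ => ?_
    rw [← Finset.filter_univ_mem (g h), card_filter]
    simp

def locE (b : Bool) {n : ℕ} (T : Finset (Option (Fin n))) : ℕ :=
  (if b = true ∧ none ∈ T then 1 else 0) + (if b = false ∧ none ∉ T then 1 else 0)
    + ∑ i : Fin n, ((if none ∈ T ∧ some i ∈ T then 1 else 0)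
        + (if none ∉ T ∧ some i ∉ T then 1 else 0))

lemma cnt_Sof (b g) :
    (edgeIn (SHGraph H) (Sof H b g)).card + (edgeIn (SHGraph H) (Sof H b g)ᶜ).card
      = ∑ h : {x // x ∈ H}, locE b (g h) := by
  rw [edgeIn_card, edgeIn_card, ← Finset.sum_add_distrib, ← Finset.univ_sigma_univ,
    Finset.sum_sigma]
  refine Finset.sum_congr rfl fun h _ => ?_
  rw [Fintype.sum_option, locE]
  simp only [edgeOf, Sym2.mem_iff, Finset.mem_compl, forall_eq_or_imp, forall_eq,
    none_mem_Sof, some_mem_Sof, Finset.sum_add_distrib]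
  cases b <;> simp

lemma weight_Sof (t y : ℚ) (b g) :
    t ^ ((edgeIn (SHGraph H) (Sof H b g)).card + (edgeIn (SHGraph H) (Sof H b g)ᶜ).card)
      * y ^ (Sof H b g).card
    = (if b then y else 1)
        * ∏ h : {x // x ∈ H}, (t ^ locE b (g h) * y ^ (g h).card) := by
  rw [cnt_Sof, card_Sof, pow_add, Finset.prod_mul_distrib, Finset.prod_pow_eq_pow_sum,
    Finset.prod_pow_eq_pow_sum]
  cases b <;> simp <;> ring

lemma sum_Sof (f : Finset (SHVertex H) → ℚ) (b : Bool) :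
    ∑ S ∈ univ.filter (fun S : Finset (SHVertex H) => (none ∈ S) ↔ (b = true)), f S
      = ∑ g ∈ Fintype.piFinset
          (fun h : {x // x ∈ H} => (univ : Finset (Finset (Option (Fin h.1))))),
          f (Sof H b g) := by
  have key : ∀ S ∈ univ.filter (fun S : Finset (SHVertex H) => (none ∈ S) ↔ (b = true)),
      Sof H b (fun h => univ.filter fun x => some ⟨h, x⟩ ∈ S) = S := by
    intro S hS
    rw [Finset.mem_filter] at hS
    ext v
    rcases v with _ | ⟨h, x⟩
    · simp [hS.2]
    · simp
  refine Finset.sum_nbij' (i := fun S => fun h => univ.filter fun x => some ⟨h, x⟩ ∈ S)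
    (j := fun g => Sof H b g) ?_ ?_ ?_ ?_ ?_
  · intro S hS
    simp [Fintype.mem_piFinset]
  · intro g _
    simp
  · exact key
  · intro g _
    funext h
    ext x
    simp
  · intro S hS
    rw [key S hS]

lemma sum_two (n : ℕ) (x z : ℚ) :
    ∑ L : Finset (Fin n), x ^ L.card * z ^ (univ \ L).card = (x + z) ^ n := by
  have h := Finset.prod_add (fun _ : Fin n => x) (fun _ => z) univ
  simp only [Finset.prod_const, Finset.powerset_univ, Finset.card_univ,
    Fintype.card_fin] at h
  exact h.symm

def Tof {n : ℕ} (c : Bool) (L : Finset (Fin n)) : Finset (Option (Fin n)) :=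
  (if c then {none} else ∅) ∪ L.image some

@[simp] lemma none_mem_Tof {n c} {L : Finset (Fin n)} : (none ∈ Tof c L) ↔ c = true := by
  cases c <;> simp [Tof]

@[simp] lemma some_mem_Tof {n c} {L : Finset (Fin n)} {i : Fin n} :
    (some i ∈ Tof c L) ↔ i ∈ L := by
  cases c <;> simp [Tof]

lemma card_Tof {n : ℕ} (c : Bool) (L : Finset (Fin n)) :
    (Tof c L).card = (if c then 1 else 0) + L.card := by
  rw [Tof, Finset.card_union_of_disjoint, Finset.card_image_of_injective _
    (Option.some_injective _)]
  · cases c <;> simp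
  · cases c <;> simp

lemma sum_locW (t y : ℚ) (b : Bool) (n : ℕ) :
    ∑ T : Finset (Option (Fin n)), t ^ locE b T * y ^ T.card
      = if b then y * t * (y * t + 1) ^ n + (y + t) ^ n
        else y * (y * t + 1) ^ n + t * (y + t) ^ n := by
  have reindex : ∑ T : Finset (Option (Fin n)), t ^ locE b T * y ^ T.card
      = ∑ p : Bool × Finset (Fin n), t ^ locE b (Tof p.1 p.2) * y ^ (Tof p.1 p.2).card := by
    refine (Finset.sum_nbij' (i := fun p : Bool × Finset (Fin n) => Tof p.1 p.2)
      (j := fun T => (none ∈ T, univ.filter fun i => some i ∈ T)) ?_ ?_ ?_ ?_ ?_).symm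
    · intro p _; simp
    · intro T _; simp
    · intro p _
      obtain ⟨c, L⟩ := p
      simp only
      congr 1
      · simp
      · ext i; simp
    · intro T _
      ext v
      rcases v with _ | i <;> simp
    · intro p _; rfl
  rw [reindex, Fintype.sum_prod_type, Fintype.sum_bool]
  have hT : ∀ L : Finset (Fin n), locE b (Tof true L) = (if b = true then 1 else 0) + L.card := by
    intro L
    rw [locE]
    simp only [none_mem_Tof, some_mem_Tof]
    rw [← Finset.filter_univ_mem L, card_filter]
    cases b <;> simp
  have hF : ∀ L : Finset (Fin n), locE b (Tof false L)
      = (if b = false then 1 else 0) + (univ \ L).card := by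
    intro L
    rw [locE]
    simp only [none_mem_Tof, some_mem_Tof]
    rw [Finset.sdiff_eq_filter, card_filter]
    cases b <;> simp
  have e1 : ∑ L : Finset (Fin n), t ^ locE b (Tof true L) * y ^ (Tof true L).card
      = (if b = true then t else 1) * y * (t * y + 1) ^ n := by
    rw [← sum_two n (t * y) 1]
    rw [Finset.mul_sum]
    refine Finset.sum_congr rfl fun L _ => ?_
    rw [hT, card_Tof, pow_add, pow_add, mul_pow]
    cases b <;> simp <;> ring
  have e2 : ∑ L : Finset (Fin n), t ^ locE b (Tof false L) * y ^ (Tof false L).card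
      = (if b = false then t else 1) * (y + t) ^ n := by
    rw [← sum_two n y t, Finset.mul_sum]
    refine Finset.sum_congr rfl fun L _ => ?_
    rw [hF, card_Tof, pow_add]
    cases b <;> simp <;> ring
  rw [e1, e2]
  cases b <;>
    simp only [Bool.false_eq_true, Bool.true_eq_false, if_true, if_false] <;> ring

lemma main_sum (t y : ℚ) (b : Bool) :
    ∑ S ∈ univ.filter (fun S : Finset (SHVertex H) => (none ∈ S) ↔ (b = true)),
        t ^ ((edgeIn (SHGraph H) S).card + (edgeIn (SHGraph H) Sᶜ).card) * y ^ S.card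
      = (if b then y else 1) * ∏ h ∈ H,
          (if b then y * t * (y * t + 1) ^ h + (y + t) ^ h
           else y * (y * t + 1) ^ h + t * (y + t) ^ h) := by
  rw [sum_Sof]
  have hps := Finset.prod_univ_sum
    (fun h : {x // x ∈ H} => (univ : Finset (Finset (Option (Fin h.1)))))
    (fun h T => t ^ locE b T * y ^ T.card)
  rw [Finset.sum_congr rfl fun g _ => weight_Sof H t y b g, ← Finset.mul_sum, ← hps]
  congr 1
  rw [Finset.prod_congr rfl fun (h : {x // x ∈ H}) _ => sum_locW t y b h.1,
    Finset.prod_coe_sort H (fun h => if b then y * t * (y * t + 1) ^ h + (y + t) ^ h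
      else y * (y * t + 1) ^ h + t * (y + t) ^ h)]

end ZbiSH

theorem Zbi_SH (H : Finset ℕ) (hH : ∀ h ∈ H, 0 < h) (t y : ℚ) :
    ZbiBC (SHGraph H) {none} ∅ t y =
        y * ∏ h ∈ H, (y * t * (y * t + 1) ^ h + (y + t) ^ h) ∧
    ZbiBC (SHGraph H) ∅ {none} t y =
        ∏ h ∈ H, (y * (y * t + 1) ^ h + t * (y + t) ^ h) := by
  constructor
  · have h1 : univ.filter (fun S : Finset (SHVertex H) => {none} ⊆ S ∧ Disjoint S ∅)
        = univ.filter (fun S : Finset (SHVertex H) => (none ∈ S) ↔ (true = true)) := by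
      ext S; simp
    rw [ZbiBC, h1, ZbiSH.main_sum H t y true]
    simp
  · have h2 : univ.filter (fun S : Finset (SHVertex H) => ∅ ⊆ S ∧ Disjoint S {none})
        = univ.filter (fun S : Finset (SHVertex H) => (none ∈ S) ↔ (false = true)) := by
      ext S; simp [Finset.disjoint_singleton_right]
    rw [ZbiBC, h2, ZbiSH.main_sum H t y false]
    simp
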